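/- arXiv:2504.01551 — 8 statements merged into one kernel-verified Lean document; each statement's English description precedes it below -/
import Mathlib

section
/- (Soundness of d-separation in C-DMGs) Let G^c = (C, E^c) be the C-DMG of an ADMG G = (V, E), and let C_X, C_Y, C_W be disjoint subsets of C. If C_X and C_Y are d-separated by C_W in G^c, then in G the sets X = ⋃_{C ∈ C_X} C and Y = ⋃_{C ∈ C_Y} C are d-separated by W = ⋃_{C ∈ C_W} C. -/
/-- A directed mixed graph: directed edges (`dir`) and bidirected edges (`bi`). -/
structure DMG (V : Type) where
  dir : V → V → Prop
  bi : V → V → Prop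

/-- Orientation of a step of a walk: forward directed, backward directed, or bidirected. -/
inductive EdgeType : Type
  | fwd | bwd | bidir

/-- The step relation of a walk for each edge type. -/
def DMG.step {V : Type} (G : DMG V) : EdgeType → V → V → Prop
  | .fwd, a, b => G.dir a b
  | .bwd, a, b => G.dir b a
  | .bidir, a, b => G.bi a b ∨ G.bi b a

/-- A walk of `n` vertices `v 0, …, v (n-1)` with step types `e 0, …, e (n-2)`. -/
def IsWalk {V : Type} (G : DMG V) (v : ℕ → V) (e : ℕ → EdgeType) (n : ℕ) : Prop :=
  0 < n ∧ ∀ i, i + 1 < n → G.step (e i) (v i) (v (i + 1))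

/-- A path: a walk with no repeated vertices. -/
def IsPath {V : Type} (G : DMG V) (v : ℕ → V) (e : ℕ → EdgeType) (n : ℕ) : Prop :=
  IsWalk G v e n ∧ ∀ i j, i < n → j < n → v i = v j → i = j

/-- The step has an arrowhead at its right endpoint. -/
def headInto : EdgeType → Prop
  | .fwd => True
  | .bwd => False
  | .bidir => True

/-- The step has an arrowhead at its left endpoint. -/
def tailInto : EdgeType → Prop
  | .fwd => False
  | .bwd => True
  | .bidir => True

/-- Position `i` of a walk with step types `e` is a collider:
arrowheads into it from both incident steps. -/
def ColliderAt (e : ℕ → EdgeType) (i : ℕ) : Prop :=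
  headInto (e (i - 1)) ∧ tailInto (e i)

/-- `b` is a descendant of `a`: reachable by a (possibly empty) directed path. -/
def Desc {V : Type} (G : DMG V) (a b : V) : Prop :=
  Relation.ReflTransGen G.dir a b

/-- A walk is blocked by `W` if an endpoint is in `W`, or some non-collider on it is
in `W`, or some collider on it has no descendant in `W`. -/
def Blocked {V : Type} (G : DMG V) (v : ℕ → V) (e : ℕ → EdgeType) (n : ℕ)
    (W : Set V) : Prop :=
  v 0 ∈ W ∨ v (n - 1) ∈ W ∨
    (∃ i, 0 < i ∧ i + 1 < n ∧ ¬ ColliderAt e i ∧ v i ∈ W) ∨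
    (∃ i, 0 < i ∧ i + 1 < n ∧ ColliderAt e i ∧ ∀ d, Desc G (v i) d → d ∉ W)

/-- d-separation: every path from `X` to `Y` is blocked by `W`. -/
def dSep {V : Type} (G : DMG V) (X Y W : Set V) : Prop :=
  ∀ (n : ℕ) (v : ℕ → V) (e : ℕ → EdgeType),
    IsPath G v e n → v 0 ∈ X → v (n - 1) ∈ Y → Blocked G v e n W

/-- The directed part of the graph has no cycles. -/
def Acyclic {V : Type} (G : DMG V) : Prop :=
  ∀ a, ¬ Relation.TransGen G.dir a a

/-- The cluster quotient (C-DMG) of a graph along a cluster map `Cl`. -/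
def DMG.quot {V C : Type} (G : DMG V) (Cl : V → C) : DMG C where
  dir a b := ∃ x y, Cl x = a ∧ Cl y = b ∧ G.dir x y
  bi a b := ∃ x y, Cl x = a ∧ Cl y = b ∧ G.bi x y

/-- The mutilated graph `G_{\overline{A}\underline{B}}`: remove all edges with an
arrowhead into `A` and all directed edges out of `B`. -/
def mutilate {V : Type} (G : DMG V) (A B : Set V) : DMG V where
  dir a b := G.dir a b ∧ b ∉ A ∧ a ∉ B
  bi a b := G.bi a b ∧ a ∉ A ∧ b ∉ A

section AuxSound

variable {C' : Type} (H : DMG C') (CX CY CW : Set C')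

/-- An "open walk" from `CX` to `CY` avoiding `CW`: every interior non-collider is
outside `CW` and every interior collider has a descendant in `CW`. -/
def OpenW (v : ℕ → C') (e : ℕ → EdgeType) (n : ℕ) : Prop :=
  IsWalk H v e n ∧ v 0 ∈ CX ∧ v (n - 1) ∈ CY ∧ v 0 ∉ CW ∧ v (n - 1) ∉ CW ∧
    (∀ i, 0 < i → i + 1 < n → ¬ ColliderAt e i → v i ∉ CW) ∧
    (∀ i, 0 < i → i + 1 < n → ColliderAt e i → ∃ d, Desc H (v i) d ∧ d ∈ CW)

lemma eq_fwd_of_not_tail {t : EdgeType} (h : ¬ tailInto t) : t = .fwd := by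
  cases t <;> simp [tailInto] at h ⊢

lemma eq_bwd_of_not_head {t : EdgeType} (h : ¬ headInto t) : t = .bwd := by
  cases t <;> simp [headInto] at h ⊢

lemma desc_of_fwd_chain {v : ℕ → C'} {e : ℕ → EdgeType} {n : ℕ}
    (hw : IsWalk H v e n) {a b : ℕ} (hab : a ≤ b) (hbn : b < n)
    (hf : ∀ t, a ≤ t → t < b → e t = .fwd) : Desc H (v a) (v b) := by
  induction b with
  | zero =>
      have : a = 0 := Nat.le_zero.mp hab
      subst this; exact Relation.ReflTransGen.refl
  | succ b ih =>
      rcases Nat.lt_or_ge a (b + 1) with hlt | hge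
      · have hab' : a ≤ b := Nat.lt_succ_iff.mp hlt
        have hchain : Desc H (v a) (v b) :=
          ih hab' (Nat.lt_of_succ_lt hbn) (fun t ht htb => hf t ht (Nat.lt_succ_of_lt htb))
        have hstep := hw.2 b hbn
        have hb : e b = .fwd := hf b hab' (Nat.lt_succ_self b)
        rw [hb] at hstep
        exact Relation.ReflTransGen.tail hchain hstep
      · have : a = b + 1 := le_antisymm hab hge
        subst this; exact Relation.ReflTransGen.refl

/-- Splicing out the segment between two occurrences of the same vertex keeps the
walk open. -/
lemma splice {v : ℕ → C'} {e : ℕ → EdgeType} {n : ℕ}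
    (ho : OpenW H CX CY CW v e n) {i j : ℕ} (hij : i < j) (hjn : j < n)
    (hv : v i = v j) :
    ∃ (v' : ℕ → C') (e' : ℕ → EdgeType) (n' : ℕ),
      n' < n ∧ OpenW H CX CY CW v' e' n' := by
  classical
  obtain ⟨hw, hx, hy, hxW, hyW, hnc, hc⟩ := ho
  set m := j - i with hm
  have hmi : i + m = j := by omega
  refine ⟨fun k => if k ≤ i then v k else v (k + m),
          fun k => if k < i then e k else e (k + m), n - m, by omega, ?_⟩
  set v' : ℕ → C' := fun k => if k ≤ i then v k else v (k + m) with hv'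
  set e' : ℕ → EdgeType := fun k => if k < i then e k else e (k + m) with he'
  set n' : ℕ := n - m with hn'
  have hn'i : i + 1 ≤ n' := by omega
  -- key simp facts
  have hv'le : ∀ k, k ≤ i → v' k = v k := fun k hk => by simp [hv', hk]
  have hv'gt : ∀ k, i < k → v' k = v (k + m) := fun k hk => by
    simp [hv', Nat.not_le.mpr hk]
  have he'lt : ∀ k, k < i → e' k = e k := fun k hk => by simp [he', hk]
  have he'ge : ∀ k, i ≤ k → e' k = e (k + m) := fun k hk => by
    simp [he', Nat.not_lt.mpr hk]
  have hend : v' (n' - 1) = v (n - 1) := by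
    rcases Nat.lt_or_ge i (n' - 1) with hlt | hge
    · rw [hv'gt _ hlt]; congr 1; omega
    · have : n' - 1 = i := by omega
      rw [this, hv'le _ le_rfl]
      have : j = n - 1 := by omega
      rw [hv, this]
  -- the new walk
  have hwalk : IsWalk H v' e' n' := by
    refine ⟨by omega, ?_⟩
    intro k hk
    rcases Nat.lt_or_ge k i with hki | hki
    · rw [he'lt _ hki, hv'le _ (Nat.le_of_lt hki)]
      rcases Nat.lt_or_ge (k + 1) i with h1 | h1
      · rw [hv'le _ (Nat.le_of_lt h1)]
        exact hw.2 k (by omega)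
      · have hk1 : k + 1 = i := by omega
        rw [hv'le _ (le_of_eq hk1)]
        exact hw.2 k (by omega)
    · rcases Nat.eq_or_lt_of_le hki with heq | hlt
      · rw [← heq] at hk ⊢
        rw [he'ge _ le_rfl, hv'le _ le_rfl, hv'gt _ (by omega), hmi, hv]
        have h1 : i + 1 + m = j + 1 := by omega
        rw [h1]
        exact hw.2 j (by omega)
      · rw [he'ge _ hki, hv'gt _ hlt, hv'gt _ (by omega)]
        have h1 : k + 1 + m = k + m + 1 := by omega
        rw [h1]
        exact hw.2 (k + m) (by omega)
  -- collider classification at the spliced position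
  have hcoll_shift : ∀ k, i < k → (ColliderAt e' k ↔ ColliderAt e (k + m)) := by
    intro k hk
    unfold ColliderAt
    rw [he'ge _ (Nat.le_of_lt hk), he'ge _ (by omega)]
    have : k - 1 + m = k + m - 1 := by omega
    rw [this]
  have hcoll_lt : ∀ k, 0 < k → k < i → (ColliderAt e' k ↔ ColliderAt e k) := by
    intro k hk0 hk
    unfold ColliderAt
    rw [he'lt _ hk, he'lt _ (by omega)]
  refine ⟨hwalk, ?_, ?_, ?_, ?_, ?_, ?_⟩
  · rw [hv'le 0 (Nat.zero_le i)]; exact hx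
  · rw [hend]; exact hy
  · rw [hv'le 0 (Nat.zero_le i)]; exact hxW
  · rw [hend]; exact hyW
  · -- non-colliders
    intro k hk0 hk1 hnck
    rcases Nat.lt_or_ge k i with hki | hki
    · rw [hv'le _ (Nat.le_of_lt hki)]
      exact hnc k hk0 (by omega) (by rwa [hcoll_lt k hk0 hki] at hnck)
    rcases Nat.eq_or_lt_of_le hki with heq | hlt
    · -- k = i
      subst heq
      rw [hv'le _ le_rfl]
      have hj1n : j + 1 < n := by omega
      unfold ColliderAt at hnck
      rw [he'lt _ (by omega), he'ge _ le_rfl, hmi] at hnck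
      by_cases hh : headInto (e (i - 1))
      · have ht : ¬ tailInto (e j) := fun ht => hnck ⟨hh, ht⟩
        have : ¬ ColliderAt e j := fun hcj => ht hcj.2
        have := hnc j (by omega) hj1n this
        rwa [hv]
      · have : ¬ ColliderAt e i := fun hck => hh hck.1
        exact hnc i hk0 (by omega) this
    · rw [hv'gt _ hlt]
      exact hnc (k + m) (by omega) (by omega)
        (by rwa [hcoll_shift k hlt] at hnck)
  · -- colliders
    intro k hk0 hk1 hck
    rcases Nat.lt_or_ge k i with hki | hki
    · rw [hv'le _ (Nat.le_of_lt hki)]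
      exact hc k hk0 (by omega) (by rwa [hcoll_lt k hk0 hki] at hck)
    rcases Nat.eq_or_lt_of_le hki with heq | hlt
    · -- k = i : the interesting case
      subst heq
      rw [hv'le _ le_rfl]
      have hj1n : j + 1 < n := by omega
      unfold ColliderAt at hck
      rw [he'lt _ (by omega), he'ge _ le_rfl, hmi] at hck
      obtain ⟨hh, ht⟩ := hck
      by_cases hti : tailInto (e i)
      · exact hc i hk0 (by omega) ⟨hh, hti⟩
      · have hek : e i = .fwd := eq_fwd_of_not_tail hti
        by_cases hhj : headInto (e (j - 1))
        · have := hc j (by omega) hj1n ⟨hhj, ht⟩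
          rwa [hv]
        · have hej1 : e (j - 1) = .bwd := eq_bwd_of_not_head hhj
          have hkj1 : i < j - 1 := by
            rcases Nat.lt_or_ge i (j - 1) with h | h
            · exact h
            · exfalso
              have : i = j - 1 := by omega
              rw [this, hej1] at hek
              exact EdgeType.noConfusion hek
          -- least index `t > k` with an arrowhead into its left end
          have hQ : ∃ t, i < t ∧ t ≤ j - 1 ∧ tailInto (e t) :=
            ⟨j - 1, hkj1, le_rfl, by rw [hej1]; trivial⟩
          obtain ⟨t, ⟨htk, htj, htt⟩, hmin⟩ := Nat.lt_wfRel.wf.has_min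
            {t | i < t ∧ t ≤ j - 1 ∧ tailInto (e t)} hQ
          have hfwd : ∀ s, i ≤ s → s < t → e s = .fwd := by
            intro s hs hst
            rcases Nat.eq_or_lt_of_le hs with heq | hlt'
            · rw [← heq]; exact hek
            · by_contra hne
              have htl : tailInto (e s) := by
                cases hes : e s
                · exact absurd hes hne
                · trivial
                · trivial
              exact hmin s ⟨hlt', by omega, htl⟩ hst
          have hcol_t : ColliderAt e t := by
            constructor
            · have : e (t - 1) = .fwd := hfwd (t - 1) (by omega) (by omega)
              rw [this]; trivial
            · exact htt
          obtain ⟨d, hdd, hdW⟩ := hc t (by omega) (by omega) hcol_t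
          have hdesc : Desc H (v i) (v t) :=
            desc_of_fwd_chain H hw (Nat.le_of_lt htk) (by omega) hfwd
          exact ⟨d, Relation.ReflTransGen.trans hdesc hdd, hdW⟩
    · rw [hv'gt _ hlt]
      exact hc (k + m) (by omega) (by omega)
        (by rwa [hcoll_shift k hlt] at hck)

/-- If `CX` and `CY` are d-separated by `CW`, there is no open walk. -/
lemma no_open_walk (hd : dSep H CX CY CW) :
    ∀ n (v : ℕ → C') (e : ℕ → EdgeType), ¬ OpenW H CX CY CW v e n := by
  intro n
  induction n using Nat.strong_induction_on with
  | _ n ih =>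
    intro v e ho
    by_cases hp : ∀ a b, a < n → b < n → v a = v b → a = b
    · have hbl := hd n v e ⟨ho.1, hp⟩ ho.2.1 ho.2.2.1
      obtain ⟨_, _, _, hxW, hyW, hnc, hc⟩ := ho
      rcases hbl with h0 | h1 | ⟨a, ha0, ha1, hanc, haW⟩ | ⟨a, ha0, ha1, hac, had⟩
      · exact hxW h0
      · exact hyW h1
      · exact hnc a ha0 ha1 hanc haW
      · obtain ⟨d, hdd, hdW⟩ := hc a ha0 ha1 hac
        exact had d hdd hdW
    · push_neg at hp
      obtain ⟨a, b, ha, hb, hvab, hne⟩ := hp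
      rcases Nat.lt_or_ge a b with hab | hab
      · obtain ⟨v', e', n', hn', ho'⟩ := splice H CX CY CW ho hab hb hvab
        exact ih n' hn' v' e' ho'
      · have hba : b < a := by omega
        obtain ⟨v', e', n', hn', ho'⟩ := splice H CX CY CW ho hba ha hvab.symm
        exact ih n' hn' v' e' ho'

end AuxSound

/-- soundness of d-separation in C-DMGs: if the cluster sets are
d-separated in the C-DMG, then the corresponding unions of clusters are
d-separated in the underlying ADMG. -/
theorem dSep_sound_CDMG {V C : Type} (G : DMG V) (Cl : V → C)
    (hac : Acyclic G) (hsurj : Function.Surjective Cl)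
    (CX CY CW : Set C)
    (hXY : Disjoint CX CY) (hXW : Disjoint CX CW) (hYW : Disjoint CY CW)
    (h : dSep (G.quot Cl) CX CY CW) :
    dSep G {x | Cl x ∈ CX} {x | Cl x ∈ CY} {x | Cl x ∈ CW} := by
  intro n v e hp hx hy
  by_contra hb
  unfold Blocked at hb
  push_neg at hb
  obtain ⟨h0, h1, hncb, hcb⟩ := hb
  apply no_open_walk (G.quot Cl) CX CY CW h n (fun k => Cl (v k)) e
  have hstep : ∀ (t : EdgeType) (a b : V), G.step t a b →
      (G.quot Cl).step t (Cl a) (Cl b) := by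
    intro t a b hs
    cases t with
    | fwd => exact ⟨a, b, rfl, rfl, hs⟩
    | bwd => exact ⟨b, a, rfl, rfl, hs⟩
    | bidir =>
        rcases hs with hs | hs
        · exact Or.inl ⟨a, b, rfl, rfl, hs⟩
        · exact Or.inr ⟨b, a, rfl, rfl, hs⟩
  refine ⟨⟨hp.1.1, fun k hk => hstep _ _ _ (hp.1.2 k hk)⟩, hx, hy, h0, h1, ?_, ?_⟩
  · intro k hk0 hk1 hck
    exact hncb k hk0 hk1 hck
  · intro k hk0 hk1 hck
    obtain ⟨d, hdd, hdW⟩ := hcb k hk0 hk1 hck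
    refine ⟨Cl d, ?_, hdW⟩
    exact Relation.ReflTransGen.lift Cl (fun a b hab => ⟨a, b, rfl, rfl, hab⟩) _ _ hdd
end

section
/- (Completeness of d-separation in C-DMGs) Let G^c = (C, E^c) be a C-DMG without self-loops restrictions, and C_X, C_Y, C_W disjoint subsets of C. If C_X and C_Y are not d-separated by C_W in G^c, then there exists an ADMG G = (V, E) compatible with G^c (i.e., whose cluster quotient graph is exactly G^c, with each cluster of size at least 2) in which X = ⋃_{C ∈ C_X} C and Y = ⋃_{C ∈ C_Y} C are not d-separated by W = ⋃_{C ∈ C_W} C. -/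
/-- Auxiliary: the big compatible graph on `C × ℕ`. -/
def bigGraph {C : Type} (Gc : DMG C) : DMG (C × ℕ) where
  dir a b := Gc.dir a.1 b.1 ∧ b.2 = a.2 + 1
  bi a b := Gc.bi a.1 b.1

/-- Auxiliary: heights along a lifted walk. -/
def liftHt (e : ℕ → EdgeType) (n : ℕ) : ℕ → ℕ
  | 0 => n
  | i+1 =>
    match e i with
    | .fwd => liftHt e n i + 1
    | .bwd => liftHt e n i - 1
    | .bidir => liftHt e n i

lemma liftHt_ge (e : ℕ → EdgeType) (n : ℕ) : ∀ i, n ≤ liftHt e n i + i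
  | 0 => by simp [liftHt]
  | i+1 => by
    have ih := liftHt_ge e n i
    cases he : e i <;> simp [liftHt, he] <;> omega

lemma DMG.ext' {V : Type} {A B : DMG V} (h1 : A.dir = B.dir) (h2 : A.bi = B.bi) :
    A = B := by
  cases A; cases B; cases h1; cases h2; rfl

lemma bigGraph_transGen_lt {C : Type} (Gc : DMG C) {x y : C × ℕ}
    (h : Relation.TransGen (bigGraph Gc).dir x y) : x.2 < y.2 := by
  induction h with
  | single h => obtain ⟨-, h2⟩ := h; omega
  | tail _ h ih => obtain ⟨-, h2⟩ := h; omega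

lemma bigGraph_desc {C : Type} (Gc : DMG C) {a d : C}
    (h : Relation.ReflTransGen Gc.dir a d) (k : ℕ) :
    ∃ m, Relation.ReflTransGen (bigGraph Gc).dir (a, k) (d, m) := by
  induction h with
  | refl => exact ⟨k, Relation.ReflTransGen.refl⟩
  | tail _ hbc ih =>
    obtain ⟨m, hm⟩ := ih
    exact ⟨m + 1, hm.tail ⟨hbc, rfl⟩⟩

/-- completeness of d-separation in C-DMGs: if the cluster sets are
not d-separated in the C-DMG, then there is a compatible ADMG, with every
cluster of size at least 2, in which the unions of clusters are not d-separated. -/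
theorem dSep_complete_CDMG {C : Type} (Gc : DMG C)
    (CX CY CW : Set C)
    (hXY : Disjoint CX CY) (hXW : Disjoint CX CW) (hYW : Disjoint CY CW)
    (h : ¬ dSep Gc CX CY CW) :
    ∃ (V : Type) (G : DMG V) (Cl : V → C),
      Acyclic G ∧ G.quot Cl = Gc ∧
      (∀ c : C, ∃ x y : V, x ≠ y ∧ Cl x = c ∧ Cl y = c) ∧
      ¬ dSep G {x | Cl x ∈ CX} {x | Cl x ∈ CY} {x | Cl x ∈ CW} := by
  rw [dSep] at h
  push_neg at h
  obtain ⟨n, v, e, hpath, hvX, hvY, hnb⟩ := h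
  refine ⟨C × ℕ, bigGraph Gc, Prod.fst, ?_, ?_, ?_, ?_⟩
  · intro a hcyc
    exact absurd (bigGraph_transGen_lt Gc hcyc) (lt_irrefl _)
  · refine DMG.ext' ?_ ?_
    · funext a b
      apply propext
      constructor
      · rintro ⟨x, y, rfl, rfl, hxy, -⟩; exact hxy
      · intro hab; exact ⟨(a, 0), (b, 1), rfl, rfl, hab, rfl⟩
    · funext a b
      apply propext
      constructor
      · rintro ⟨x, y, rfl, rfl, hxy⟩; exact hxy
      · intro hab; exact ⟨(a, 0), (b, 0), rfl, rfl, hab⟩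
  · intro c
    exact ⟨(c, 0), (c, 1), by simp, rfl, rfl⟩
  · intro hsep
    set f : ℕ → ℕ := liftHt e n with hf
    set u : ℕ → C × ℕ := fun i => (v i, f i) with hu
    obtain ⟨⟨hn, hwalk⟩, hinj⟩ := hpath
    have hstep : ∀ i, i + 1 < n → (bigGraph Gc).step (e i) (u i) (u (i + 1)) := by
      intro i hi
      have hw := hwalk i hi
      have hge : n ≤ f i + i := liftHt_ge e n i
      cases he : e i with
      | fwd =>
        rw [he] at hw
        refine ⟨hw, ?_⟩
        show f (i + 1) = f i + 1
        simp [hf, liftHt, he]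
      | bwd =>
        rw [he] at hw
        refine ⟨hw, ?_⟩
        show f i = f (i + 1) + 1
        have h1 : f (i + 1) = f i - 1 := by simp [hf, liftHt, he]
        omega
      | bidir =>
        rw [he] at hw
        exact hw
    have hupath : IsPath (bigGraph Gc) u e n := by
      refine ⟨⟨hn, hstep⟩, ?_⟩
      intro i j hi hj hij
      exact hinj i j hi hj (congrArg Prod.fst hij)
    have hb := hsep n u e hupath hvX hvY
    apply hnb
    rw [Blocked] at hb ⊢
    rcases hb with h0 | h1 | ⟨i, hi0, hi1, hnc, hiw⟩ | ⟨i, hi0, hi1, hc, hd⟩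
    · exact Or.inl h0
    · exact Or.inr (Or.inl h1)
    · exact Or.inr (Or.inr (Or.inl ⟨i, hi0, hi1, hnc, hiw⟩))
    · refine Or.inr (Or.inr (Or.inr ⟨i, hi0, hi1, hc, ?_⟩))
      intro d hdesc hdW
      obtain ⟨m, hm⟩ := bigGraph_desc Gc hdesc (f i)
      exact hd (d, m) hm hdW
end

section
/- (Compatibility of mutilated graphs) Let G = (V, E) be an ADMG with compatible C-DMG G^c = (C, E^c), and let C_A, C_B ⊆ C, with A = ⋃_{C ∈ C_A} C and B = ⋃_{C ∈ C_B} C. Then the mutilated graph (G^c)_{\overline{C_A}\underline{C_B}} (obtained from G^c by removing all edges into clusters in C_A and all directed edges out of clusters in C_B) is exactly the C-DMG compatible with the mutilated ADMG G_{\overline{A}\underline{B}} (obtained from G by removing all edges into A and all directed edges out of B). -/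
/-- compatibility of mutilated graphs: the cluster quotient of the
mutilated ADMG is exactly the mutilated C-DMG, i.e. quotient and mutilation
commute. -/
theorem quot_mutilate_comm {V C : Type} (G : DMG V) (Cl : V → C)
    (hac : Acyclic G) (hsurj : Function.Surjective Cl)
    (CA CB : Set C) :
    (mutilate G {x | Cl x ∈ CA} {x | Cl x ∈ CB}).quot Cl =
      mutilate (G.quot Cl) CA CB := by
  have h : ∀ (a b : C),
      ((mutilate G {x | Cl x ∈ CA} {x | Cl x ∈ CB}).quot Cl).dir a b ↔
        (mutilate (G.quot Cl) CA CB).dir a b := by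
    intro a b
    constructor
    · rintro ⟨x, y, hx, hy, hd, hA, hB⟩
      exact ⟨⟨x, y, hx, hy, hd⟩, hy ▸ hA, hx ▸ hB⟩
    · rintro ⟨⟨x, y, hx, hy, hd⟩, hA, hB⟩
      exact ⟨x, y, hx, hy, hd, by simp [hy, hA], by simp [hx, hB]⟩
  have h2 : ∀ (a b : C),
      ((mutilate G {x | Cl x ∈ CA} {x | Cl x ∈ CB}).quot Cl).bi a b ↔
        (mutilate (G.quot Cl) CA CB).bi a b := by
    intro a b
    constructor
    · rintro ⟨x, y, hx, hy, hd, hxA, hyA⟩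
      exact ⟨⟨x, y, hx, hy, hd⟩, hx ▸ hxA, hy ▸ hyA⟩
    · rintro ⟨⟨x, y, hx, hy, hd⟩, hxA, hyA⟩
      exact ⟨x, y, hx, hy, hd, by simp [hx, hxA], by simp [hy, hyA]⟩
  cases hq : (mutilate G {x | Cl x ∈ CA} {x | Cl x ∈ CB}).quot Cl with
  | mk d1 b1 =>
    cases hm : mutilate (G.quot Cl) CA CB with
    | mk d2 b2 =>
      congr 1
      · funext a b; exact propext ((hq ▸ h a b).trans (by rw [hm]))
      · funext a b; exact propext ((hq ▸ h2 a b).trans (by rw [hm]))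
end

section
/- Let G^c = (C, E^c) be a C-DMG and π = ⟨C₁,…,Cₙ⟩ a path in G^c from C₁ ∈ C_X to Cₙ ∈ C_Y that is active given C_W. Fix a linear order ≤_D on C such that every collider on π has a directed path to C_W that is monotone with respect to ≤_D. Define an ADMG G with vertex set V = ⋃_{C ∈ C} {V⁰_C, V¹_C} and edges: V⁰_C → V¹_{C'} for every C → C' ∈ E^c; V⁰_C → V⁰_{C'} for every C → C' ∈ E^c used (in either direction) on π; V¹_C → V¹_{C'} for every C → C' ∈ E^c with C ≤_D C'; and V⁰_C ↔ V⁰_{C'} for every C ↔ C' ∈ E^c. Then G is acyclic, its cluster quotient (with clusters {V⁰_C, V¹_C}) equals G^c, and the path ⟨V⁰_{C₁},…,V⁰_{Cₙ}⟩ is active in G given W = ⋃_{C ∈ C_W} {V⁰_C, V¹_C}. -/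
/-- The two-copy ADMG construction over the clusters: vertices (c, false) and
(c, true); edges (c,false) → (c',true) for every cluster edge c → c';
(c,false) → (c',false) for every cluster edge c → c' used (in either direction)
on the given path; (c,true) → (c',true) for every cluster edge c → c' with
c below c' in the given order; and (c,false) ↔ (c',false) for every bidirected
cluster edge c ↔ c'. -/
def twoCopy {C : Type} (Gc : DMG C) (p : ℕ → C) (e : ℕ → EdgeType) (n : ℕ)
    (r : C → C → Prop) : DMG (C × Bool) where
  dir a b :=
    (a.2 = false ∧ b.2 = true ∧ Gc.dir a.1 b.1) ∨
    (a.2 = false ∧ b.2 = false ∧ Gc.dir a.1 b.1 ∧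
      ∃ i, i + 1 < n ∧
        ((p i = a.1 ∧ p (i + 1) = b.1 ∧ e i = EdgeType.fwd) ∨
         (p i = b.1 ∧ p (i + 1) = a.1 ∧ e i = EdgeType.bwd))) ∨
    (a.2 = true ∧ b.2 = true ∧ Gc.dir a.1 b.1 ∧ r a.1 b.1)
  bi a b := a.2 = false ∧ b.2 = false ∧ Gc.bi a.1 b.1

/-- Height function along the path: goes up on backward edges, down otherwise. -/
def htZ (e : ℕ → EdgeType) : ℕ → ℤ
  | 0 => 0
  | (i+1) => htZ e i + (match e i with | EdgeType.bwd => 1 | _ => -1)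

lemma DMG_ext_aux {V : Type} {G H : DMG V} (h1 : G.dir = H.dir) (h2 : G.bi = H.bi) :
    G = H := by
  cases G; cases H; cases h1; cases h2; rfl


/-- for an active path in a C-DMG (without directed self-loops) and a
linear order making the colliders' directed paths into the conditioning clusters
monotone, the two-copy graph is acyclic, its cluster quotient is the C-DMG, and
the copied path is active given the union of the conditioning clusters. -/
theorem twoCopy_spec {C : Type} (Gc : DMG C) (CX CY CW : Set C)
    (hnoself : ∀ c, ¬ Gc.dir c c)
    (p : ℕ → C) (e : ℕ → EdgeType) (n : ℕ)
    (hpath : IsPath Gc p e n) (hX : p 0 ∈ CX) (hY : p (n - 1) ∈ CY)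
    (hact : ¬ Blocked Gc p e n CW)
    (r : C → C → Prop) (hlin : IsLinearOrder C r)
    (hmono : ∀ i, 0 < i → i + 1 < n → ColliderAt e i →
      ∃ (m : ℕ) (q : ℕ → C), q 0 = p i ∧ q m ∈ CW ∧
        ∀ k, k < m → Gc.dir (q k) (q (k + 1)) ∧ r (q k) (q (k + 1))) :
    Acyclic (twoCopy Gc p e n r) ∧
    (twoCopy Gc p e n r).quot Prod.fst = Gc ∧
    ¬ Blocked (twoCopy Gc p e n r) (fun i => (p i, false)) e n
        {vb : C × Bool | vb.1 ∈ CW} := by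
  classical
  obtain ⟨⟨hn0, hwalk⟩, hinj⟩ := hpath
  set G := twoCopy Gc p e n r with hG
  -- potential function on clusters
  set f : C → ℤ := fun c => if h : ∃ i, i < n ∧ p i = c then htZ e h.choose else 0 with hf
  have f_eq : ∀ i, i < n → f (p i) = htZ e i := by
    intro i hi
    have hex : ∃ j, j < n ∧ p j = p i := ⟨i, hi, rfl⟩
    have hch := hex.choose_spec
    have : hex.choose = i := hinj _ _ hch.1 hi hch.2
    simp only [hf, dif_pos hex, this]
  -- every edge into a false vertex comes from a false vertex and decreases f
  have hfdec : ∀ x y : C × Bool, G.dir x y → y.2 = false →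
      x.2 = false ∧ f y.1 < f x.1 := by
    intro x y hxy hy
    rcases hxy with ⟨_, hb, _⟩ | ⟨ha, _, _, i, hin, hw⟩ | ⟨_, hb, _⟩
    · rw [hy] at hb; exact absurd hb (by simp)
    · refine ⟨ha, ?_⟩
      have hi : i < n := Nat.lt_of_succ_lt hin
      rcases hw with ⟨hpi, hpi1, he⟩ | ⟨hpi, hpi1, he⟩
      · rw [← hpi, ← hpi1, f_eq i hi, f_eq (i+1) hin]
        simp [htZ, he]
      · rw [← hpi, ← hpi1, f_eq i hi, f_eq (i+1) hin]
        simp [htZ, he]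
    · rw [hy] at hb; exact absurd hb (by simp)
  have hfalse : ∀ x y : C × Bool, Relation.TransGen G.dir x y → y.2 = false →
      x.2 = false ∧ f y.1 < f x.1 := by
    intro x y h
    induction h with
    | single h => exact fun hy => hfdec _ _ h hy
    | tail _ h2 ih =>
      intro hy
      obtain ⟨hc, hlt⟩ := hfdec _ _ h2 hy
      obtain ⟨hx, hlt2⟩ := ih hc
      exact ⟨hx, hlt.trans hlt2⟩
  -- strict order on the true copy
  haveI := hlin
  set t : C → C → Prop := fun a b => r a b ∧ a ≠ b with ht
  have htedge : ∀ x y : C × Bool, G.dir x y → x.2 = true →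
      y.2 = true ∧ t x.1 y.1 := by
    intro x y hxy hx
    rcases hxy with ⟨ha, _, _⟩ | ⟨ha, _, _, _⟩ | ⟨_, hb, hd, hr⟩
    · rw [hx] at ha; exact absurd ha (by simp)
    · rw [hx] at ha; exact absurd ha (by simp)
    · refine ⟨hb, hr, fun hh => hnoself y.1 ?_⟩
      rwa [hh] at hd
  have httrans : ∀ a b c : C, t a b → t b c → t a c := by
    intro a b c ⟨h1, h2⟩ ⟨h3, h4⟩
    refine ⟨trans_of r h1 h3, fun hac => h2 ?_⟩
    exact antisymm h1 (hac ▸ h3)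
  have htrue : ∀ x y : C × Bool, Relation.TransGen G.dir x y → x.2 = true →
      y.2 = true ∧ t x.1 y.1 := by
    intro x y h
    induction h with
    | single h => exact fun hx => htedge _ _ h hx
    | tail _ h2 ih =>
      intro hx
      obtain ⟨hb, htb⟩ := ih hx
      obtain ⟨hc, htc⟩ := htedge _ _ h2 hb
      exact ⟨hc, httrans _ _ _ htb htc⟩
  refine ⟨?_, ?_, ?_⟩
  · -- acyclicity
    intro a hcyc
    rcases Bool.eq_false_or_eq_true a.2 with ha | ha
    · exact (htrue a a hcyc ha).2.2 rfl
    · exact absurd (hfalse a a hcyc ha).2 (lt_irrefl _)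
  · -- quotient
    apply DMG_ext_aux
    · funext a b
      apply propext
      constructor
      · rintro ⟨x, y, hx, hy, hxy⟩
        rcases hxy with ⟨_, _, hd⟩ | ⟨_, _, hd, _⟩ | ⟨_, _, hd, _⟩ <;>
          rwa [hx, hy] at hd
      · intro h
        exact ⟨(a, false), (b, true), rfl, rfl, Or.inl ⟨rfl, rfl, h⟩⟩
    · funext a b
      apply propext
      constructor
      · rintro ⟨x, y, hx, hy, _, _, hd⟩
        rwa [hx, hy] at hd
      · intro h
        exact ⟨(a, false), (b, false), rfl, rfl, rfl, rfl, h⟩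
  · -- the copied path is active
    rw [Blocked] at hact
    push_neg at hact
    obtain ⟨h0, h1, h2, _⟩ := hact
    rintro (hw | hw | ⟨i, hi0, hi1, hnc, hw⟩ | ⟨i, hi0, hi1, hc, hall⟩)
    · exact h0 hw
    · exact h1 hw
    · exact h2 i hi0 hi1 hnc hw
    · obtain ⟨m, q, hq0, hqm, hq⟩ := hmono i hi0 hi1 hc
      rcases Nat.eq_zero_or_pos m with hm | hm
      · refine hall (p i, false) Relation.ReflTransGen.refl ?_
        show p i ∈ CW
        rw [← hq0, ← hm]; exact hqm
      · have key : ∀ k, 1 ≤ k → k ≤ m → Desc G (p i, false) (q k, true) := by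
          intro k
          induction k with
          | zero => omega
          | succ k ih =>
            intro _ hk
            rcases Nat.eq_zero_or_pos k with hk0 | hk0
            · subst hk0
              refine Relation.ReflTransGen.single (Or.inl ⟨rfl, rfl, ?_⟩)
              have := (hq 0 (by omega)).1
              rwa [hq0] at this
            · refine Relation.ReflTransGen.tail (ih hk0 (by omega)) ?_
              exact Or.inr (Or.inr ⟨rfl, rfl, (hq k (by omega)).1, (hq k (by omega)).2⟩)
        refine hall (q m, true) (key m hm le_rfl) ?_
        exact hqm
end

section
/- (Rule 3 ancestor transfer) Let G = (V, E) be an ADMG with compatible C-DMG G^c = (C, E^c), and C_Z, C_W ⊆ C with Z, W the unions of the respective clusters. For any X ∈ V: if X is an ancestor of some vertex of W in the mutilated graph G_{\overline{Z}}, then Cl(X) is an ancestor of some cluster of C_W in (G^c)_{\overline{C_Z}}. Contrapositively, if no cluster in C_X is an ancestor of C_W in (G^c)_{\overline{C_Z}}, then no vertex of X = ⋃ C_X is an ancestor of W in G_{\overline{Z}}; hence the sets X(W) (non-ancestors of W among X) satisfy: C_X(C_W) = C_X implies X(W) = X. -/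
private lemma rule3_lift {V C : Type} (G : DMG V) (Cl : V → C) (CZ : Set C) {x w : V}
    (h : Relation.ReflTransGen (mutilate G {a | Cl a ∈ CZ} ∅).dir x w) :
    Relation.ReflTransGen (mutilate (G.quot Cl) CZ ∅).dir (Cl x) (Cl w) := by
  induction h with
  | refl => exact .refl
  | tail _ hbc ih =>
    exact ih.tail ⟨⟨_, _, rfl, rfl, hbc.1⟩, hbc.2.1, not_false⟩

/-- Rule 3 ancestor transfer: ancestorship of the conditioning
clusters transfers from the mutilated ADMG to the mutilated C-DMG; hence if no
cluster in a set is an ancestor of the conditioning clusters in the mutilated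
C-DMG, then no vertex of the corresponding union is an ancestor of the union of
the conditioning clusters in the mutilated ADMG. -/
theorem rule3_ancestor_transfer {V C : Type} (G : DMG V) (Cl : V → C)
    (hac : Acyclic G) (hsurj : Function.Surjective Cl)
    (CZ CW : Set C) :
    (∀ x : V,
      (∃ w, Cl w ∈ CW ∧
        Relation.ReflTransGen (mutilate G {a | Cl a ∈ CZ} ∅).dir x w) →
      ∃ c ∈ CW, Relation.ReflTransGen (mutilate (G.quot Cl) CZ ∅).dir (Cl x) c) ∧
    (∀ CX : Set C,
      (∀ cx ∈ CX, ¬ ∃ c ∈ CW,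
        Relation.ReflTransGen (mutilate (G.quot Cl) CZ ∅).dir cx c) →
      ∀ x : V, Cl x ∈ CX →
        ¬ ∃ w, Cl w ∈ CW ∧
          Relation.ReflTransGen (mutilate G {a | Cl a ∈ CZ} ∅).dir x w) := by
  constructor
  · rintro x ⟨w, hw, hr⟩
    exact ⟨Cl w, hw, rule3_lift G Cl CZ hr⟩
  · rintro CX hCX x hx ⟨w, hw, hr⟩
    exact hCX (Cl x) hx ⟨Cl w, hw, rule3_lift G Cl CZ hr⟩
end

section
/- (Completeness of Rule 1 in C-DMGs) Let G^c be a C-DMG and C_X, C_Y, C_Z, C_W disjoint subsets of clusters. If C_Y and C_X are NOT d-separated by C_Z ∪ C_W in (G^c)_{\overline{C_Z}}, then there exists an ADMG G compatible with G^c (with all clusters of size ≥ 2) such that Y and X are not d-separated by Z ∪ W in G_{\overline{Z}}. -/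
/-- Level change along an edge of a walk. -/
def edgeDelta : EdgeType → ℤ
  | .fwd => 1
  | .bwd => -1
  | .bidir => 0

/-- completeness of Rule 1 in C-DMGs: if the cluster sets are not
d-separated in the mutilated C-DMG, then some compatible ADMG with all clusters
of size at least 2 exhibits the corresponding failure of d-separation in its
mutilated graph. -/
theorem rule1_complete_CDMG {C : Type} (Gc : DMG C)
    (CX CY CZ CW : Set C)
    (hXY : Disjoint CX CY) (hXZ : Disjoint CX CZ) (hXW : Disjoint CX CW)
    (hYZ : Disjoint CY CZ) (hYW : Disjoint CY CW) (hZW : Disjoint CZ CW)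
    (h : ¬ dSep (mutilate Gc CZ ∅) CY CX (CZ ∪ CW)) :
    ∃ (V : Type) (G : DMG V) (Cl : V → C),
      Acyclic G ∧ G.quot Cl = Gc ∧
      (∀ c : C, ∃ x y : V, x ≠ y ∧ Cl x = c ∧ Cl y = c) ∧
      ¬ dSep (mutilate G {x | Cl x ∈ CZ} ∅)
          {x | Cl x ∈ CY} {x | Cl x ∈ CX} {x | Cl x ∈ CZ ∪ CW} := by
  classical
  refine ⟨C × ℤ, ⟨fun a b => Gc.dir a.1 b.1 ∧ b.2 = a.2 + 1,
    fun a b => Gc.bi a.1 b.1⟩, Prod.fst, ?_, ?_, ?_, ?_⟩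
  · -- Acyclic
    intro a hc
    have key : ∀ x y : C × ℤ,
        Relation.TransGen (fun a b : C × ℤ => Gc.dir a.1 b.1 ∧ b.2 = a.2 + 1) x y →
        x.2 < y.2 := by
      intro x y h
      induction h with
      | single h => obtain ⟨-, h2⟩ := h; omega
      | tail _ h ih => obtain ⟨-, h2⟩ := h; omega
    exact absurd (key a a hc) (lt_irrefl _)
  · -- quotient
    cases Gc with
    | mk d b =>
      simp only [DMG.quot]
      congr 1
      · funext c1 c2
        apply propext
        constructor
        · rintro ⟨x, y, rfl, rfl, hxy, -⟩; exact hxy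
        · intro hxy; exact ⟨(c1, 0), (c2, 1), rfl, rfl, hxy, rfl⟩
      · funext c1 c2
        apply propext
        constructor
        · rintro ⟨x, y, rfl, rfl, hxy⟩; exact hxy
        · intro hxy; exact ⟨(c1, 0), (c2, 0), rfl, rfl, hxy⟩
  · -- clusters of size ≥ 2
    intro c
    exact ⟨(c, 0), (c, 1), by simp, rfl, rfl⟩
  · -- not d-separated
    unfold dSep at h ⊢
    push_neg at h
    obtain ⟨n, v, e, hpath, hY, hX, hnb⟩ := h
    unfold Blocked at hnb
    push_neg at hnb
    obtain ⟨h0, h1, hnc, hcol⟩ := hnb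
    set L : ℕ → ℤ := fun i => ∑ j ∈ Finset.range i, edgeDelta (e j) with hLdef
    have hL : ∀ i, L (i + 1) = L i + edgeDelta (e i) := fun i =>
      Finset.sum_range_succ _ i
    push_neg
    refine ⟨n, fun i => (v i, L i), e, ⟨⟨hpath.1.1, ?_⟩, ?_⟩, hY, hX, ?_⟩
    · -- walk steps
      intro i hi
      have hs := hpath.1.2 i hi
      cases he : e i with
      | fwd =>
        rw [he] at hs
        obtain ⟨hd, hz, -⟩ := hs
        refine ⟨⟨hd, ?_⟩, hz, Set.notMem_empty _⟩
        show L (i + 1) = L i + 1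
        rw [hL i, he]; rfl
      | bwd =>
        rw [he] at hs
        obtain ⟨hd, hz, -⟩ := hs
        refine ⟨⟨hd, ?_⟩, hz, Set.notMem_empty _⟩
        show L i = L (i + 1) + 1
        rw [hL i, he]; show L i = L i + (-1) + 1; ring
      | bidir =>
        rw [he] at hs
        rcases hs with ⟨hb, hz1, hz2⟩ | ⟨hb, hz1, hz2⟩
        · exact Or.inl ⟨hb, hz1, hz2⟩
        · exact Or.inr ⟨hb, hz1, hz2⟩
    · -- injectivity
      intro i j hi hj hij
      exact hpath.2 i j hi hj (congrArg Prod.fst hij)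
    · -- not blocked
      intro hb
      have lift : ∀ c d, Desc (mutilate Gc CZ ∅) c d → ∀ k : ℤ,
          ∃ k', Desc (mutilate
            (⟨fun a b => Gc.dir a.1 b.1 ∧ b.2 = a.2 + 1,
              fun a b => Gc.bi a.1 b.1⟩ : DMG (C × ℤ))
            {x : C × ℤ | x.1 ∈ CZ} ∅) (c, k) (d, k') := by
        intro c d hcd
        induction hcd with
        | refl => exact fun k => ⟨k, Relation.ReflTransGen.refl⟩
        | tail h1 h2 ih =>
          intro k
          obtain ⟨k', hk'⟩ := ih k
          exact ⟨k' + 1, hk'.tail ⟨⟨h2.1, rfl⟩, h2.2.1, Set.notMem_empty _⟩⟩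
      rcases hb with hw | hw | ⟨i, hi0, hi1, hc, hw⟩ | ⟨i, hi0, hi1, hc, hw⟩
      · exact h0 hw
      · exact h1 hw
      · exact hnc i hi0 hi1 hc hw
      · obtain ⟨d, hd, hdW⟩ := hcol i hi0 hi1 hc
        obtain ⟨k', hk'⟩ := lift _ _ hd (L i)
        exact hw (d, k') hk' hdW
end

section
/- Consider the C-DMG G^c with clusters C_X, C_W, C_Y, edges C_X → C_Y, C_X → C_W, C_W → C_X (a 2-cycle between C_X and C_W), where |C_X| = |C_Y| = 1 and |C_W| = 2, and no bidirected edges. Then every ADMG compatible with G^c (respecting these cluster sizes) has vertex set {X₁, Y₁, W₁, W₂} with X₁ → Y₁, and the edges between {X₁} and {W₁, W₂} consist of exactly one edge Wᵢ → X₁ and one edge X₁ → Wⱼ with i ≠ j; in particular, in every such ADMG there is no directed path from Y₁ to X₁, and X₁ and Y₁ have no common cause, so Y₁ is d-separated from X₁ in G_{\underline{X₁}}. -/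
/-- Cluster map: vertex 0 is X1 (cluster 0), vertex 1 is Y1 (cluster 1),
vertices 2 and 3 are W1, W2 (cluster 2). -/
def clMap : Fin 4 → Fin 3 := ![0, 1, 2, 2]

/-- The C-DMG with edges C_X → C_Y, C_X → C_W, C_W → C_X and no bidirected
edges, where C_X is cluster 0, C_Y is cluster 1, C_W is cluster 2. -/
def exampleCDMG : DMG (Fin 3) where
  dir a b := (a = 0 ∧ b = 1) ∨ (a = 0 ∧ b = 2) ∨ (a = 2 ∧ b = 0)
  bi _ _ := False

/-- every ADMG compatible with the example C-DMG (with the fixed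
cluster sizes 1, 1, 2) has the edge X1 → Y1, exactly one edge from a W vertex
into X1 and one edge from X1 into the other W vertex, no directed path from Y1
to X1, no common cause of X1 and Y1, and Y1 is d-separated from X1 once the
edges out of X1 are removed. -/
theorem singleton_cluster_example (G : DMG (Fin 4))
    (hac : Acyclic G) (hquot : G.quot clMap = exampleCDMG) :
    G.dir 0 1 ∧
    ((G.dir 2 0 ∧ G.dir 0 3 ∧ ¬ G.dir 3 0 ∧ ¬ G.dir 0 2) ∨
     (G.dir 3 0 ∧ G.dir 0 2 ∧ ¬ G.dir 2 0 ∧ ¬ G.dir 0 3)) ∧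
    ¬ Relation.TransGen G.dir 1 0 ∧
    ¬ (∃ z : Fin 4, Relation.TransGen G.dir z 0 ∧
        Relation.TransGen (mutilate G ∅ {0}).dir z 1) ∧
    dSep (mutilate G ∅ {0}) {1} {0} ∅ := by
  -- Forward direction of compatibility
  have key : ∀ x y : Fin 4, G.dir x y → exampleCDMG.dir (clMap x) (clMap y) := by
    intro x y h
    rw [← hquot]; exact ⟨x, y, rfl, rfl, h⟩
  have keybi : ∀ x y : Fin 4, ¬ G.bi x y := by
    intro x y h
    have : exampleCDMG.bi (clMap x) (clMap y) := by
      rw [← hquot]; exact ⟨x, y, rfl, rfl, h⟩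
    exact this
  -- negative directed edge facts
  have n11 : ¬ G.dir 1 1 := fun h => by simpa [exampleCDMG, clMap] using key 1 1 h
  have n10 : ¬ G.dir 1 0 := fun h => by simpa [exampleCDMG, clMap] using key 1 0 h
  have n12 : ¬ G.dir 1 2 := fun h => by simpa [exampleCDMG, clMap] using key 1 2 h
  have n13 : ¬ G.dir 1 3 := fun h => by simpa [exampleCDMG, clMap] using key 1 3 h
  have n21 : ¬ G.dir 2 1 := fun h => by simpa [exampleCDMG, clMap] using key 2 1 h
  have n31 : ¬ G.dir 3 1 := fun h => by simpa [exampleCDMG, clMap] using key 3 1 h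
  -- positive: the edge X1 → Y1
  have hxy : G.dir 0 1 := by
    have h01 : exampleCDMG.dir 0 1 := by simp [exampleCDMG]
    rw [← hquot] at h01
    obtain ⟨x, y, hx, hy, h⟩ := h01
    have hx0 : x = 0 := by
      fin_cases x <;> simp_all [clMap]
    have hy1 : y = 1 := by
      fin_cases y <;> simp_all [clMap]
    rw [hx0, hy1] at h; exact h
  -- existence of edges between clusters 0 and 2
  have h0w : G.dir 0 2 ∨ G.dir 0 3 := by
    have h02 : exampleCDMG.dir 0 2 := by simp [exampleCDMG]
    rw [← hquot] at h02
    obtain ⟨x, y, hx, hy, h⟩ := h02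
    have hx0 : x = 0 := by fin_cases x <;> simp_all [clMap]
    have hy2 : y = 2 ∨ y = 3 := by fin_cases y <;> simp_all [clMap]
    rcases hy2 with hy2 | hy2
    · left; rw [hx0, hy2] at h; exact h
    · right; rw [hx0, hy2] at h; exact h
  have hw0 : G.dir 2 0 ∨ G.dir 3 0 := by
    have h20 : exampleCDMG.dir 2 0 := by simp [exampleCDMG]
    rw [← hquot] at h20
    obtain ⟨x, y, hx, hy, h⟩ := h20
    have hy0 : y = 0 := by fin_cases y <;> simp_all [clMap]
    have hx2 : x = 2 ∨ x = 3 := by fin_cases x <;> simp_all [clMap]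
    rcases hx2 with hx2 | hx2
    · left; rw [hx2, hy0] at h; exact h
    · right; rw [hx2, hy0] at h; exact h
  -- acyclicity pair exclusions
  have ncyc : ∀ a b : Fin 4, G.dir a b → G.dir b a → False := by
    intro a b h1 h2
    exact hac a (Relation.TransGen.head h1 (Relation.TransGen.single h2))
  -- the main case analysis
  have hcases :
      (G.dir 2 0 ∧ G.dir 0 3 ∧ ¬ G.dir 3 0 ∧ ¬ G.dir 0 2) ∨
      (G.dir 3 0 ∧ G.dir 0 2 ∧ ¬ G.dir 2 0 ∧ ¬ G.dir 0 3) := by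
    rcases hw0 with h20 | h30
    · left
      have n02 : ¬ G.dir 0 2 := fun h => ncyc 0 2 h h20
      have h03 : G.dir 0 3 := h0w.resolve_left n02
      exact ⟨h20, h03, fun h => ncyc 0 3 h03 h, n02⟩
    · right
      have n03 : ¬ G.dir 0 3 := fun h => ncyc 0 3 h h30
      have h02 : G.dir 0 2 := h0w.resolve_right n03
      exact ⟨h30, h02, fun h => ncyc 2 0 h h02, n03⟩
  -- no edge out of vertex 1
  have nout1 : ∀ c : Fin 4, ¬ G.dir 1 c := by
    intro c; fin_cases c <;> assumption
  -- no directed path Y1 → X1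
  have hnt : ¬ Relation.TransGen G.dir 1 0 := by
    intro h
    obtain ⟨b, hb, -⟩ := Relation.TransGen.head'_iff.mp h
    exact nout1 b hb
  -- in the mutilated graph, no edge into vertex 1
  have nin1 : ∀ c : Fin 4, ¬ (mutilate G ∅ {0}).dir c 1 := by
    intro c ⟨h, _, hc⟩
    fin_cases c
    · exact hc rfl
    · exact n11 h
    · exact n21 h
    · exact n31 h
  -- no edge out of vertex 1 in the mutilated graph
  have nout1' : ∀ c : Fin 4, ¬ (mutilate G ∅ {0}).dir 1 c := by
    intro c ⟨h, _, _⟩; exact nout1 c h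
  refine ⟨hxy, hcases, hnt, ?_, ?_⟩
  · rintro ⟨z, -, h⟩
    cases h with
    | single h => exact nin1 z h
    | tail _ h => exact nin1 _ h
  · intro n v e hp h0 h1
    exfalso
    have hv0 : v 0 = 1 := h0
    have hvn : v (n - 1) = 0 := h1
    have hn2 : 2 ≤ n := by
      rcases Nat.lt_or_ge n 2 with h | h
      · interval_cases n
        · exact absurd hp.1.1 (by omega)
        · rw [hv0] at hvn; exact absurd hvn (by decide)
      · exact h
    have hstep := hp.1.2 0 (by omega)
    rw [hv0] at hstep
    cases he : e 0 with
    | fwd => rw [he] at hstep; exact nout1' _ hstep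
    | bwd => rw [he] at hstep; exact nin1 _ hstep
    | bidir =>
      rw [he] at hstep
      rcases hstep with ⟨h, _⟩ | ⟨h, _⟩
      · exact keybi _ _ h
      · exact keybi _ _ h
end

section
/- (Descendant containment under quotient) Let G = (V, E) be an ADMG with C-DMG G^c over partition C. For every V ∈ V, Desc(V, G) ⊆ ⋃_{C ∈ Desc(Cl(V), G^c)} C. Consequently, for W = ⋃_{C ∈ C_W} C with C_W ⊆ C: Desc(Cl(V), G^c) ∩ C_W = ∅ implies Desc(V, G) ∩ W = ∅. -/
/-- descendant containment under quotient: descendants at the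
micro level map into descendants of the cluster at the macro level; hence a
cluster-level collider with no cluster-descendant among the conditioning
clusters has no micro-descendant in the union of those clusters. -/
theorem desc_containment_quotient {V C : Type} (G : DMG V) (Cl : V → C)
    (hac : Acyclic G) (hsurj : Function.Surjective Cl) :
    (∀ x d : V, Desc G x d → Desc (G.quot Cl) (Cl x) (Cl d)) ∧
    (∀ (CW : Set C) (x : V),
      (∀ c : C, Desc (G.quot Cl) (Cl x) c → c ∉ CW) →
      ∀ d : V, Desc G x d → Cl d ∉ CW) := by
  have key : ∀ x d : V, Desc G x d → Desc (G.quot Cl) (Cl x) (Cl d) := by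
    intro x d h
    induction h with
    | refl => exact Relation.ReflTransGen.refl
    | tail _ hstep ih => exact ih.tail ⟨_, _, rfl, rfl, hstep⟩
  exact ⟨key, fun CW x h d hd => h _ (key x d hd)⟩
end
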